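/- Let a, b, c and a', b', c' be real numbers satisfying the four equations a + b + 1 = a' + b' − c', a + ab − ac + b = a'² + a'b' − 2a'c' − b'c', ab(c−1) = a'b'(2c'−a'), and ab + bc = b'c'. Then M₀(a',b',c') = 0. -/

import Mathlib

noncomputable def M0 (u v w d : ℝ) : ℝ :=
  Matrix.det !![1, -u, v, -w, 0;
                0, 1, -u, v, -w;
                u - 1, u + v - u ^ 2 - d, (u - 1) * d, 0, 0;
                0, u - 1, u + v - u ^ 2 - d, (u - 1) * d, 0;
                0, 0, u - 1, u + v - u ^ 2 - d, (u - 1) * d]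

noncomputable def M0Chen (a' b' c' : ℝ) : ℝ :=
  M0 (a' + b' - c') (a' ^ 2 + a' * b' - 2 * a' * c' - b' * c')
    (-(a' * b' * (2 * c' - a'))) (b' * c')

set_option maxHeartbeats 4000000 in
lemma M0_eq (u v w d : ℝ) :
    M0 u v w d =
      (u - 1) * d * ((u - 1) * d * ((u - 1) * d)) +
        (u * ((u + v - u ^ 2 - d) * ((u - 1) * d * ((u - 1) * d))) +
          (v *
              ((u + v - u ^ 2 - d) * ((u + v - u ^ 2 - d) * ((u - 1) * d)) +
                -((u - 1) * d * ((u - 1) * ((u - 1) * d)))) +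
            -((-1) ^ 3 * w *
                ((u + v - u ^ 2 - d) * ((u + v - u ^ 2 - d) * (u + v - u ^ 2 - d) + -((u - 1) * d * (u - 1))) +
                  -((u - 1) * d * ((u - 1) * (u + v - u ^ 2 - d))))))) +
      (u *
          (u * ((u - 1) * ((u - 1) * d * ((u - 1) * d))) +
            (v * ((u - 1) * ((u + v - u ^ 2 - d) * ((u - 1) * d))) +
              -((-1) ^ 3 * w * ((u - 1) * ((u + v - u ^ 2 - d) * (u + v - u ^ 2 - d) + -((u - 1) * d * (u - 1))))))) +
        (v *
            (-((u - 1) * ((u - 1) * d * ((u - 1) * d))) +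
              (v * ((u - 1) * ((u - 1) * ((u - 1) * d))) +
                -((-1) ^ 3 * w * ((u - 1) * ((u - 1) * (u + v - u ^ 2 - d)))))) +
          -((-1) ^ 3 * w *
              (-((u - 1) * ((u + v - u ^ 2 - d) * ((u - 1) * d))) +
                (-(u * ((u - 1) * ((u - 1) * ((u - 1) * d)))) +
                  -((-1) ^ 3 * w * ((u - 1) * ((u - 1) * (u - 1))))))))) := by
  unfold M0
  simp +decide [Matrix.det_succ_row_zero, Fin.sum_univ_succ, Fin.succAbove]

theorem matching_charpolys_implies_M0_zero (a b c a' b' c' : ℝ)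
    (h1 : a + b + 1 = a' + b' - c')
    (h2 : a + a * b - a * c + b = a' ^ 2 + a' * b' - 2 * a' * c' - b' * c')
    (h3 : a * b * (c - 1) = a' * b' * (2 * c' - a'))
    (h4 : a * b + b * c = b' * c') :
    M0Chen a' b' c' = 0 := by
  unfold M0Chen
  rw [M0_eq, ← h1, ← h2, ← h3, ← h4]
  ring
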